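/- With (d₁,d₂,d₃,d₄) = (2, 2(2ℓ−3), 2(2ℓ−3), 2) and c₁₂³ = c₂₃⁴ = (2ℓ−3)/(2ℓ−1) for ℓ ≥ 3, the tuple (x₁,x₂,x₃,x₄) = (1, ℓ−3/2, ℓ−1/2, 2ℓ−2) satisfies r₁ = r₂ = r₃ = r₄, where r₁ = 1/(2x₁) + (c₁₂³/(2d₁))(x₁/(x₂x₃) − x₂/(x₁x₃) − x₃/(x₁x₂)), r₂ = 1/(2x₂) + (c₁₂³/(2d₂))(x₂/(x₁x₃) − x₁/(x₂x₃) − x₃/(x₁x₂)) + (c₂₃⁴/(2d₂))(x₂/(x₃x₄) − x₄/(x₂x₃) − x₃/(x₂x₄)), r₃ = 1/(2x₃) + (c₁₂³/(2d₃))(x₃/(x₁x₂) − x₂/(x₁x₃) − x₁/(x₂x₃)) + (c₂₃⁴/(2d₃))(x₃/(x₂x₄) − x₄/(x₂x₃) − x₂/(x₃x₄)), r₄ = 1/(2x₄) + (c₂₃⁴/(2d₄))(x₄/(x₂x₃) − x₃/(x₂x₄) − x₂/(x₃x₄)). -/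

import Mathlib

set_option maxHeartbeats 1000000

/-- For SO(2ℓ+1)/U(1)×U(1)×SO(2ℓ−3), ℓ ≥ 3, with isotropy dimensions
(2, 2(2ℓ−3), 2(2ℓ−3), 2) and structure constants c₁₂³ = c₂₃⁴ = (2ℓ−3)/(2ℓ−1),
the Kähler–Einstein metric (1, ℓ−3/2, ℓ−1/2, 2ℓ−2) satisfies r₁ = r₂ = r₃ = r₄. -/
theorem stmt_19 (ℓ : ℤ) (hℓ : 3 ≤ ℓ) :
    let L : ℝ := (ℓ : ℝ)
    let d₁ : ℝ := 2
    let d₂ : ℝ := 2 * (2 * L - 3)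
    let d₃ : ℝ := 2 * (2 * L - 3)
    let d₄ : ℝ := 2
    let c123 : ℝ := (2 * L - 3) / (2 * L - 1)
    let c234 : ℝ := (2 * L - 3) / (2 * L - 1)
    let x₁ : ℝ := 1
    let x₂ : ℝ := L - 3 / 2
    let x₃ : ℝ := L - 1 / 2
    let x₄ : ℝ := 2 * L - 2
    let r₁ : ℝ := 1 / (2 * x₁)
      + (c123 / (2 * d₁)) * (x₁ / (x₂ * x₃) - x₂ / (x₁ * x₃) - x₃ / (x₁ * x₂))
    let r₂ : ℝ := 1 / (2 * x₂)
      + (c123 / (2 * d₂)) * (x₂ / (x₁ * x₃) - x₁ / (x₂ * x₃) - x₃ / (x₁ * x₂))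
      + (c234 / (2 * d₂)) * (x₂ / (x₃ * x₄) - x₄ / (x₂ * x₃) - x₃ / (x₂ * x₄))
    let r₃ : ℝ := 1 / (2 * x₃)
      + (c123 / (2 * d₃)) * (x₃ / (x₁ * x₂) - x₂ / (x₁ * x₃) - x₁ / (x₂ * x₃))
      + (c234 / (2 * d₃)) * (x₃ / (x₂ * x₄) - x₄ / (x₂ * x₃) - x₂ / (x₃ * x₄))
    let r₄ : ℝ := 1 / (2 * x₄)
      + (c234 / (2 * d₄)) * (x₄ / (x₂ * x₃) - x₃ / (x₂ * x₄) - x₂ / (x₃ * x₄))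
    r₁ = r₂ ∧ r₂ = r₃ ∧ r₃ = r₄ := by
  have hL : (3 : ℝ) ≤ (ℓ : ℝ) := by exact_mod_cast hℓ
  set L : ℝ := (ℓ : ℝ) with hLdef
  have h1 : (2 * L - 3) ≠ 0 := by nlinarith
  have h2 : (2 * L - 1) ≠ 0 := by nlinarith
  have h3 : (L - 3 / 2 : ℝ) ≠ 0 := by nlinarith
  have h4 : (L - 1 / 2 : ℝ) ≠ 0 := by nlinarith
  have h5 : (2 * L - 2 : ℝ) ≠ 0 := by nlinarith
  have h6 : (3 - L * 8 + L ^ 2 * 4 : ℝ) ≠ 0 := by nlinarith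
  have h7 : (2 - L * 6 + L ^ 2 * 4 : ℝ) ≠ 0 := by nlinarith
  have h8 : (6 - L * 10 + L ^ 2 * 4 : ℝ) ≠ 0 := by nlinarith
  dsimp only
  have h1' : (L * 2 - 3 : ℝ) ≠ 0 := by nlinarith
  have h2' : (L * 2 - 1 : ℝ) ≠ 0 := by nlinarith
  have h9 : (L - 1 : ℝ) ≠ 0 := by nlinarith
  refine ⟨?_, ?_, ?_⟩ <;>
  · field_simp
    ring
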